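/- Let u, v be elements of an algebraically closed field k of characteristic zero with v ≠ 0, and set R = 27v + 4v² − u²v + 4u³ − 18uv. Then the degree 6 polynomial f(X) = (v²X³ + uvX² + vX + 1)(4v²X³ + v²X² + 2vX + 1) ∈ k[X] has a repeated root if and only if (v − 27)·R = 0. -/

import Mathlib

open Polynomial in
theorem stmt_5 {k : Type*} [Field k] [CharZero k] [IsAlgClosed k] (u v : k)
    (hv : v ≠ 0) :
    ¬ Squarefree ((C (v ^ 2) * X ^ 3 + C (u * v) * X ^ 2 + C v * X + 1) *
        (C (4 * v ^ 2) * X ^ 3 + C (v ^ 2) * X ^ 2 + C (2 * v) * X + 1) : k[X]) ↔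
      (v - 27) * (27 * v + 4 * v ^ 2 - u ^ 2 * v + 4 * u ^ 3 - 18 * u * v) = 0 := by
  set p : k[X] := C (v ^ 2) * X ^ 3 + C (u * v) * X ^ 2 + C v * X + 1 with hp
  set q : k[X] := C (4 * v ^ 2) * X ^ 3 + C (v ^ 2) * X ^ 2 + C (2 * v) * X + 1 with hq
  constructor
  · -- forward
    intro hns
    simp only [Squarefree, not_forall] at hns
    obtain ⟨a, ha2, hau⟩ := hns
    have hf0 : p * q ≠ 0 := by
      intro h0
      have := congrArg (eval 0) h0
      simp [hp, hq] at this
    have ha0 : a ≠ 0 := by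
      rintro rfl
      rw [zero_mul] at ha2
      exact hf0 (zero_dvd_iff.mp ha2)
    have hdeg : a.degree ≠ 0 := fun h => hau (Polynomial.isUnit_iff_degree_eq_zero.mpr h)
    obtain ⟨c, hc⟩ := IsAlgClosed.exists_root a hdeg
    have hXc : (X - C c) ∣ a := Polynomial.dvd_iff_isRoot.mpr hc
    have hsq : (X - C c) ^ 2 ∣ p * q := by
      calc (X - C c) ^ 2 = (X - C c) * (X - C c) := sq (X - C c)
        _ ∣ a * a := mul_dvd_mul hXc hXc
        _ ∣ p * q := ha2
    obtain ⟨g, hg⟩ := hsq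
    have h1 : (v^2*c^3 + u*v*c^2 + v*c + 1) * (4*v^2*c^3 + v^2*c^2 + 2*v*c + 1) = 0 := by
      have h := congrArg (eval c) hg
      simp only [hp, hq, eval_mul, eval_add, eval_pow, eval_C, eval_X, eval_one, eval_sub,
        sub_self] at h
      rw [h]; ring
    have h2 : (3*v^2*c^2 + 2*u*v*c + v) * (4*v^2*c^3 + v^2*c^2 + 2*v*c + 1)
        + (v^2*c^3 + u*v*c^2 + v*c + 1) * (12*v^2*c^2 + 2*v^2*c + 2*v) = 0 := by
      have h := congrArg (eval c) (congrArg derivative hg)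
      simp only [hp, hq, derivative_mul, derivative_add, derivative_pow, derivative_C,
        derivative_X, derivative_one, derivative_sub, eval_mul, eval_add, eval_pow, eval_C,
        eval_X, eval_one, eval_sub, eval_natCast, sub_self, eval_zero, zero_mul, mul_zero,
        add_zero, zero_add, pow_one, ne_eq, OfNat.ofNat_ne_zero, not_false_eq_true, zero_pow,
        one_mul, mul_one] at h
      push_cast at h
      linear_combination h
    -- scalar case analysis
    have hRgoal : ∀ _ : (27 * v + 4 * v ^ 2 - u ^ 2 * v + 4 * u ^ 3 - 18 * u * v) = 0,
        (v - 27) * (27 * v + 4 * v ^ 2 - u ^ 2 * v + 4 * u ^ 3 - 18 * u * v) = 0 :=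
      fun h => by rw [h, mul_zero]
    have hv5 : v ^ 5 ≠ 0 := pow_ne_zero 5 hv
    rcases mul_eq_zero.mp h1 with hpe | hqe
    · have h2' : (3*v^2*c^2 + 2*u*v*c + v) * (4*v^2*c^3 + v^2*c^2 + 2*v*c + 1) = 0 := by
        linear_combination h2 - (12*v^2*c^2 + 2*v^2*c + 2*v) * hpe
      rcases mul_eq_zero.mp h2' with hdpe | hqe
      · -- p(c)=0, p'(c)=0 : v^5 * R = A2*p + B2*p'
        apply hRgoal
        have key : v^5 * (27 * v + 4 * v ^ 2 - u ^ 2 * v + 4 * u ^ 3 - 18 * u * v) = 0 := by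
          linear_combination
            (27*v^6 - 18*v^7*c - 15*u*v^6 + 6*u^2*v^6*c + 4*u^3*v^5) * hpe +
            (4*v^6 - 9*v^6*c + 6*v^7*c^2 - 3*u*v^5 + 7*u*v^6*c - u^2*v^5 - 2*u^2*v^6*c^2
              - 2*u^3*v^5*c) * hdpe
        rcases mul_eq_zero.mp key with h | h
        · exact absurd h hv5
        · exact h
      · -- p(c)=0, q(c)=0 : -(v^5 R) = A1*p + B1*q
        apply hRgoal
        have key : v^5 * (27 * v + 4 * v ^ 2 - u ^ 2 * v + 4 * u ^ 3 - 18 * u * v) = 0 := by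
          linear_combination
            (-(-36*v^6 - 12*v^7 + 24*v^7*c - v^8 - 3*v^8*c - 28*v^8*c^2 - v^9*c - 4*v^9*c^2
              + 40*u*v^6 + 7*u*v^7 - 8*u*v^7*c + 48*u*v^7*c^2 + 6*u*v^8*c + 24*u*v^8*c^2
              - 12*u^2*v^6 + 16*u^2*v^6*c - 8*u^2*v^7*c - 32*u^2*v^7*c^2)) * hpe +
            (-(9*v^6 + 8*v^7 - 6*v^7*c + v^8 - v^8*c + 7*v^8*c^2 + v^9*c^2 - 22*u*v^6
              - 7*u*v^7 + 12*u*v^7*c - 12*u*v^7*c^2 + u*v^8*c - 6*u*v^8*c^2 + 13*u^2*v^6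
              - 16*u^2*v^6*c - 6*u^2*v^7*c + 8*u^2*v^7*c^2 - 4*u^3*v^5 + 8*u^3*v^6*c)) * hqe
        rcases mul_eq_zero.mp key with h | h
        · exact absurd h hv5
        · exact h
    · have h2' : (v^2*c^3 + u*v*c^2 + v*c + 1) * (12*v^2*c^2 + 2*v^2*c + 2*v) = 0 := by
        linear_combination h2 - (3*v^2*c^2 + 2*u*v*c + v) * hqe
      rcases mul_eq_zero.mp h2' with hpe | hdqe
      · -- p(c)=0, q(c)=0 again
        apply hRgoal
        have key : v^5 * (27 * v + 4 * v ^ 2 - u ^ 2 * v + 4 * u ^ 3 - 18 * u * v) = 0 := by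
          linear_combination
            (-(-36*v^6 - 12*v^7 + 24*v^7*c - v^8 - 3*v^8*c - 28*v^8*c^2 - v^9*c - 4*v^9*c^2
              + 40*u*v^6 + 7*u*v^7 - 8*u*v^7*c + 48*u*v^7*c^2 + 6*u*v^8*c + 24*u*v^8*c^2
              - 12*u^2*v^6 + 16*u^2*v^6*c - 8*u^2*v^7*c - 32*u^2*v^7*c^2)) * hpe +
            (-(9*v^6 + 8*v^7 - 6*v^7*c + v^8 - v^8*c + 7*v^8*c^2 + v^9*c^2 - 22*u*v^6
              - 7*u*v^7 + 12*u*v^7*c - 12*u*v^7*c^2 + u*v^8*c - 6*u*v^8*c^2 + 13*u^2*v^6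
              - 16*u^2*v^6*c - 6*u^2*v^7*c + 8*u^2*v^7*c^2 - 4*u^3*v^5 + 8*u^3*v^6*c)) * hqe
        rcases mul_eq_zero.mp key with h | h
        · exact absurd h hv5
        · exact h
      · -- q(c)=0, q'(c)=0 : -64 v^6 (v-27) = A3*q + B3*q'
        have key : (64:k) * v^6 * (v - 27) = 0 := by
          linear_combination
            (-(1728*v^6 - 480*v^7 - 2304*v^7*c + 16*v^8 + 96*v^8*c)) * hqe +
            (-(208*v^6 - 576*v^6*c - 8*v^7 + 224*v^7*c + 768*v^7*c^2 - 8*v^8*c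
              - 32*v^8*c^2)) * hdqe
        have hv27 : v - 27 = 0 := by
          have h64 : (64:k) * v^6 ≠ 0 := mul_ne_zero (by norm_num) (pow_ne_zero 6 hv)
          rcases mul_eq_zero.mp key with h | h
          · exact absurd h h64
          · exact h
        rw [hv27, zero_mul]
  · -- backward
    intro h
    by_cases hv27 : v = 27
    · -- v = 27 : q = (9X+1)^2 (36X+1)
      subst hv27
      intro hsf
      have key : q = (C (9:k) * X + 1) ^ 2 * (C (36:k) * X + 1) := by
        rw [hq]
        norm_num
        simp only [map_ofNat]
        ring
      have hdvd : (C (9:k) * X + 1) * (C (9:k) * X + 1) ∣ p * q :=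
        ⟨(C (36:k) * X + 1) * p, by rw [key]; ring⟩
      have := hsf _ hdvd
      have hdeg : (C (9:k) * X + 1).degree = 1 := by
        rw [← map_one (C : k →+* k[X])]
        exact Polynomial.degree_linear (by norm_num)
      rw [Polynomial.isUnit_iff_degree_eq_zero, hdeg] at this
      exact absurd this (by norm_num)
    · have hR : 27 * v + 4 * v ^ 2 - u ^ 2 * v + 4 * u ^ 3 - 18 * u * v = 0 := by
        rcases mul_eq_zero.mp h with h' | h'
        · exact absurd (sub_eq_zero.mp h') hv27
        · exact h'
      have hd : u ^ 2 - 3 * v ≠ 0 := by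
        intro hd0
        have hu : u ^ 2 * (u - 9) ^ 2 = 0 := by
          linear_combination 9 * hR + (u^2 - 54*u + 12*v + 81) * hd0
        rcases mul_eq_zero.mp hu with h' | h'
        · have hu0 : u = 0 := pow_eq_zero_iff (n := 2) (by norm_num) |>.mp h'
          exact hv (by linear_combination (-(1:k)/3) * hd0 + (u/3) * hu0)
        · have hu9 : u - 9 = 0 := pow_eq_zero_iff (n := 2) (by norm_num) |>.mp h'
          exact hv27 (by linear_combination (-(1:k)/3) * hd0 + ((u+9)/3) * hu9)
      set x0 : k := (9 - u) / (2 * (u ^ 2 - 3 * v)) with hx0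
      set c0 : k := u * v + 2 * v ^ 2 * x0 with hc0
      have h3 : c0 * x0 ^ 2 = 1 := by
        rw [hc0, hx0]
        have hd2 : u ^ 2 - v * 3 ≠ 0 := by rwa [mul_comm v]
        field_simp
        linear_combination (27 * v - u ^ 3) * hR
      have h2 : v ^ 2 * x0 ^ 2 - 2 * (c0 * x0) = v := by
        rw [hc0, hx0]
        have hd2 : u ^ 2 - v * 3 ≠ 0 := by rwa [mul_comm v]
        field_simp
        linear_combination (-9) * hR
      have key : p = (X - C x0) ^ 2 * (C (v ^ 2) * X + C c0) := by
        rw [hp, show (1 : k[X]) = C (c0 * x0 ^ 2) by rw [h3, map_one],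
          show (C v : k[X]) = C (v ^ 2 * x0 ^ 2 - 2 * (c0 * x0)) by rw [h2],
          show u * v = c0 - 2 * (v ^ 2 * x0) by rw [hc0]; ring]
        simp only [map_sub, map_mul, map_add, map_pow, map_ofNat]
        ring
      intro hsf
      have hdvd : (X - C x0) * (X - C x0) ∣ p * q :=
        ⟨(C (v ^ 2) * X + C c0) * q, by rw [key]; ring⟩
      exact Polynomial.not_isUnit_X_sub_C x0 (hsf _ hdvd)
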